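/- arXiv:1402.3665 — 2 statements merged into one kernel-verified Lean document; each statement's English description precedes it below -/
import Mathlib

section
/- For every integer m ≥ 3 and every index i with 1 ≤ i ≤ m−2, the operators on V^{⊗m} satisfy the braid relation Ř_i Ř_{i+1} Ř_i = Ř_{i+1} Ř_i Ř_{i+1}. -/
set_option maxRecDepth 10000
set_option maxHeartbeats 2000000

open Matrix Kronecker BigOperators

/-- The two-parameter R-matrix `Ř` on `V ⊗ V`, `V = ℂⁿ`, written in the basis
`v_i ⊗ v_j ↔ (i,j)`:
`Ř = Σᵢ Eᵢᵢ⊗Eᵢᵢ + r Σ_{i<j} Eⱼᵢ⊗Eᵢⱼ + s⁻¹ Σ_{i<j} Eᵢⱼ⊗Eⱼᵢ + (1 − r s⁻¹) Σ_{i<j} Eⱼⱼ⊗Eᵢᵢ`. -/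
noncomputable def Rhat (n : ℕ) (r s : ℂ) : Matrix (Fin n × Fin n) (Fin n × Fin n) ℂ :=
  (∑ i : Fin n, single i i (1:ℂ) ⊗ₖ single i i (1:ℂ))
  + r • (∑ i : Fin n, ∑ j : Fin n,
      if i < j then single j i (1:ℂ) ⊗ₖ single i j (1:ℂ) else 0)
  + s⁻¹ • (∑ i : Fin n, ∑ j : Fin n,
      if i < j then single i j (1:ℂ) ⊗ₖ single j i (1:ℂ) else 0)
  + (1 - r * s⁻¹) • (∑ i : Fin n, ∑ j : Fin n,
      if i < j then single j j (1:ℂ) ⊗ₖ single i i (1:ℂ) else 0)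

/-- Given an operator `M` on `V ⊗ V`, the operator on `V^{⊗m}` acting as `M` in the
tensor factors `(a, b)` (with `a ≠ b`) and as the identity in all other factors.
Here `V^{⊗m}` is identified with `(Fin m → Fin n) → ℂ` via the basis
`v_{f 0} ⊗ ⋯ ⊗ v_{f (m-1)} ↔ f`. -/
noncomputable def op2At (n m : ℕ) (M : Matrix (Fin n × Fin n) (Fin n × Fin n) ℂ)
    (a b : Fin m) : Matrix (Fin m → Fin n) (Fin m → Fin n) ℂ :=
  fun f g => M (f a, f b) (g a, g b) *
    ∏ l ∈ Finset.univ \ ({a, b} : Finset (Fin m)), (if f l = g l then (1:ℂ) else 0)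

lemma sum_pin {α : Type*} [Fintype α] [DecidableEq α] (a : α) (F : α → ℂ) (c : ℂ)
    (h : ∀ i, F i = if i = a then c else 0) : ∑ i, F i = c := by
  rw [Finset.sum_congr rfl fun i _ => h i]; simp

lemma S1 (n : ℕ) (x y u v : Fin n) :
    (∑ i : Fin n, (single i i (1:ℂ) ⊗ₖ single i i (1:ℂ)) (x,y) (u,v))
      = if x = y ∧ u = x ∧ v = x then 1 else 0 := by
  refine sum_pin x _ _ fun i => ?_
  simp only [kroneckerMap_apply, Matrix.single, of_apply]
  split_ifs
  all_goals try norm_num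
  all_goals omega

lemma S2 (n : ℕ) (x y u v : Fin n) :
    (∑ i : Fin n, ∑ j : Fin n, (if i < j then
        (single j i (1:ℂ) ⊗ₖ single i j (1:ℂ)) else 0) (x,y) (u,v))
      = if y < x ∧ u = y ∧ v = x then 1 else 0 := by
  refine sum_pin y _ _ fun i => ?_
  refine sum_pin x _ _ fun j => ?_
  by_cases hlt : i < j
  · simp only [hlt, if_pos, kroneckerMap_apply, Matrix.single, of_apply]
    split_ifs
    all_goals try norm_num
    all_goals omega
  · simp only [hlt, if_neg, not_false_iff, Matrix.zero_apply]
    split_ifs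
    all_goals try norm_num
    all_goals omega

lemma S3 (n : ℕ) (x y u v : Fin n) :
    (∑ i : Fin n, ∑ j : Fin n, (if i < j then
        (single i j (1:ℂ) ⊗ₖ single j i (1:ℂ)) else 0) (x,y) (u,v))
      = if x < y ∧ u = y ∧ v = x then 1 else 0 := by
  refine sum_pin x _ _ fun i => ?_
  refine sum_pin y _ _ fun j => ?_
  by_cases hlt : i < j
  · simp only [hlt, if_pos, kroneckerMap_apply, Matrix.single, of_apply]
    split_ifs
    all_goals try norm_num
    all_goals omega
  · simp only [hlt, if_neg, not_false_iff, Matrix.zero_apply]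
    split_ifs
    all_goals try norm_num
    all_goals omega

lemma S4 (n : ℕ) (x y u v : Fin n) :
    (∑ i : Fin n, ∑ j : Fin n, (if i < j then
        (single j j (1:ℂ) ⊗ₖ single i i (1:ℂ)) else 0) (x,y) (u,v))
      = if y < x ∧ u = x ∧ v = y then 1 else 0 := by
  refine sum_pin y _ _ fun i => ?_
  refine sum_pin x _ _ fun j => ?_
  by_cases hlt : i < j
  · simp only [hlt, if_pos, kroneckerMap_apply, Matrix.single, of_apply]
    split_ifs
    all_goals try norm_num
    all_goals omega
  · simp only [hlt, if_neg, not_false_iff, Matrix.zero_apply]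
    split_ifs
    all_goals try norm_num
    all_goals omega

noncomputable def c1 {n : ℕ} (r s : ℂ) (x y : Fin n) : ℂ :=
  if x = y then 1 else if y < x then 1 - r * s⁻¹ else 0
noncomputable def e2 {n : ℕ} (r s : ℂ) (x y : Fin n) : ℂ :=
  if x = y then 0 else if x < y then s⁻¹ else r

theorem Rhat_apply (n : ℕ) (r s : ℂ) (x y u v : Fin n) :
    Rhat n r s (x, y) (u, v) =
      (if (u, v) = (x, y) then c1 r s x y else 0)
      + (if (u, v) = (y, x) then e2 r s x y else 0) := by
  have h1 := S1 n x y u v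
  have h2 := S2 n x y u v
  have h3 := S3 n x y u v
  have h4 := S4 n x y u v
  simp only [Rhat, Matrix.add_apply, Matrix.smul_apply, Matrix.sum_apply, smul_eq_mul,
    h1, h2, h3, h4, c1, e2, Prod.mk.injEq]
  split_ifs
  all_goals try norm_num
  all_goals (exfalso; omega)

noncomputable def R3a (n : ℕ) (r s : ℂ) :
    Matrix (Fin n × Fin n × Fin n) (Fin n × Fin n × Fin n) ℂ :=
  fun p q => (if q = p then c1 r s p.1 p.2.1 else 0)
    + (if q = (p.2.1, p.1, p.2.2) then e2 r s p.1 p.2.1 else 0)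

noncomputable def R3b (n : ℕ) (r s : ℂ) :
    Matrix (Fin n × Fin n × Fin n) (Fin n × Fin n × Fin n) ℂ :=
  fun p q => (if q = p then c1 r s p.2.1 p.2.2 else 0)
    + (if q = (p.1, p.2.2, p.2.1) then e2 r s p.2.1 p.2.2 else 0)

lemma R3a_mul_apply (n : ℕ) (r s : ℂ) (A : Matrix (Fin n × Fin n × Fin n) (Fin n × Fin n × Fin n) ℂ)
    (p q : Fin n × Fin n × Fin n) :
    (R3a n r s * A) p q = c1 r s p.1 p.2.1 * A p q
      + e2 r s p.1 p.2.1 * A (p.2.1, p.1, p.2.2) q := by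
  simp [Matrix.mul_apply, R3a, add_mul, ite_mul, Finset.sum_add_distrib, Finset.sum_ite_eq]

lemma R3b_mul_apply (n : ℕ) (r s : ℂ) (A : Matrix (Fin n × Fin n × Fin n) (Fin n × Fin n × Fin n) ℂ)
    (p q : Fin n × Fin n × Fin n) :
    (R3b n r s * A) p q = c1 r s p.2.1 p.2.2 * A p q
      + e2 r s p.2.1 p.2.2 * A (p.1, p.2.2, p.2.1) q := by
  simp [Matrix.mul_apply, R3b, add_mul, ite_mul, Finset.sum_add_distrib, Finset.sum_ite_eq]

lemma ite_k (P : Prop) [inst : Decidable P] (K : ℂ) :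
    (if P then K else 0) = K * (if P then 1 else 0) := by
  split_ifs <;> ring

variable {n : ℕ}

lemma c1_refl (r s : ℂ) (x : Fin n) : c1 r s x x = 1 := by simp [c1]
lemma e2_refl (r s : ℂ) (x : Fin n) : e2 r s x x = 0 := by simp [e2]
lemma c1_lt (r s : ℂ) {x y : Fin n} (h : x < y) : c1 r s x y = 0 := by
  simp [c1, h.ne, lt_asymm h]
lemma c1_gt (r s : ℂ) {x y : Fin n} (h : y < x) : c1 r s x y = 1 - r * s⁻¹ := by
  simp [c1, h.ne', h]
lemma e2_lt (r s : ℂ) {x y : Fin n} (h : x < y) : e2 r s x y = s⁻¹ := by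
  simp [e2, h.ne, h]
lemma e2_gt (r s : ℂ) {x y : Fin n} (h : y < x) : e2 r s x y = r := by
  simp [e2, h.ne', lt_asymm h]

theorem braid3 (n : ℕ) (r s : ℂ) :
    R3a n r s * R3b n r s * R3a n r s = R3b n r s * R3a n r s * R3b n r s := by
  apply Matrix.ext
  rintro ⟨x, y, z⟩ q
  rw [Matrix.mul_assoc, Matrix.mul_assoc]
  simp only [R3a_mul_apply, R3b_mul_apply]
  simp only [R3a, R3b]
  rcases lt_trichotomy x y with h1 | h1 | h1 <;>
    rcases lt_trichotomy y z with h2 | h2 | h2 <;>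
    rcases lt_trichotomy x z with h3 | h3 | h3 <;>
    first
    | (exfalso; omega)
    | (try simp only [h1]
       try simp only [h2]
       try simp only [h3]
       try simp only [c1_lt r s h1, c1_gt r s h1, e2_lt r s h1, e2_gt r s h1]
       try simp only [c1_lt r s h2, c1_gt r s h2, e2_lt r s h2, e2_gt r s h2]
       try simp only [c1_lt r s h3, c1_gt r s h3, e2_lt r s h3, e2_gt r s h3]
       try simp only [c1_refl, e2_refl]
       try split_ifs
       all_goals try ring
       all_goals (exfalso; subst_vars; simp only [Prod.mk.injEq] at *; omega))

noncomputable def emb (n m : ℕ) (a b c : Fin m)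
    (T : Matrix (Fin n × Fin n × Fin n) (Fin n × Fin n × Fin n) ℂ) :
    Matrix (Fin m → Fin n) (Fin m → Fin n) ℂ :=
  fun f g => T (f a, f b, f c) (g a, g b, g c) *
    ∏ l ∈ Finset.univ \ ({a, b, c} : Finset (Fin m)), (if f l = g l then (1:ℂ) else 0)

lemma op2At_eq_emb_ab (n m : ℕ) (M : Matrix (Fin n × Fin n) (Fin n × Fin n) ℂ)
    (a b c : Fin m) (hab : a ≠ b) (hac : a ≠ c) (hbc : b ≠ c) :
    op2At n m M a b = emb n m a b c
      (fun p q => M (p.1, p.2.1) (q.1, q.2.1) * (if p.2.2 = q.2.2 then 1 else 0)) := by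
  have hset : (Finset.univ \ ({a, b} : Finset (Fin m)))
      = insert c (Finset.univ \ ({a, b, c} : Finset (Fin m))) := by
    ext l
    simp only [Finset.mem_sdiff, Finset.mem_univ, Finset.mem_insert, true_and,
      Finset.mem_singleton, not_or]
    omega
  ext f g
  show M (f a, f b) (g a, g b) * _ = _ * _
  rw [hset, Finset.prod_insert (by simp)]
  show _ = M (f a, f b) (g a, g b) * (if f c = g c then 1 else 0) * _
  ring

lemma op2At_eq_emb_bc (n m : ℕ) (M : Matrix (Fin n × Fin n) (Fin n × Fin n) ℂ)
    (a b c : Fin m) (hab : a ≠ b) (hac : a ≠ c) (hbc : b ≠ c) :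
    op2At n m M b c = emb n m a b c
      (fun p q => (if p.1 = q.1 then 1 else 0) * M (p.2.1, p.2.2) (q.2.1, q.2.2)) := by
  have hset : (Finset.univ \ ({b, c} : Finset (Fin m)))
      = insert a (Finset.univ \ ({a, b, c} : Finset (Fin m))) := by
    ext l
    simp only [Finset.mem_sdiff, Finset.mem_univ, Finset.mem_insert, true_and,
      Finset.mem_singleton, not_or]
    omega
  ext f g
  show M (f b, f c) (g b, g c) * _ = _ * _
  rw [hset, Finset.prod_insert (by simp)]
  show _ = (if f a = g a then 1 else 0) * M (f b, f c) (g b, g c) * _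
  ring

lemma emb_mul (n m : ℕ) (a b c : Fin m) (hab : a ≠ b) (hac : a ≠ c) (hbc : b ≠ c)
    (T T' : Matrix (Fin n × Fin n × Fin n) (Fin n × Fin n × Fin n) ℂ) :
    emb n m a b c T * emb n m a b c T' = emb n m a b c (T * T') := by
  classical
  ext f g
  rw [Matrix.mul_apply]
  set S : Finset (Fin m) := Finset.univ \ ({a, b, c} : Finset (Fin m)) with hSdef
  have hmemS : ∀ l : Fin m, l ∈ S ↔ (l ≠ a ∧ l ≠ b ∧ l ≠ c) := by
    intro l; simp [hSdef, not_or]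
  set ψ : Fin n × Fin n × Fin n → (Fin m → Fin n) := fun j =>
    Function.update (Function.update (Function.update f a j.1) b j.2.1) c j.2.2 with hψ
  have hψa : ∀ j, ψ j a = j.1 := fun j => by
    simp only [hψ, Function.update_of_ne hac, Function.update_of_ne hab, Function.update_self]
  have hψb : ∀ j, ψ j b = j.2.1 := fun j => by
    simp only [hψ, Function.update_of_ne hbc, Function.update_self]
  have hψc : ∀ j, ψ j c = j.2.2 := fun j => by
    simp only [hψ, Function.update_self]
  have hψS : ∀ j, ∀ l ∈ S, ψ j l = f l := by
    intro j l hl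
    obtain ⟨h1, h2, h3⟩ := (hmemS l).1 hl
    simp only [hψ, Function.update_of_ne h3, Function.update_of_ne h2, Function.update_of_ne h1]
  have step1 : ∑ h : Fin m → Fin n, emb n m a b c T f h * emb n m a b c T' h g
      = ∑ j : Fin n × Fin n × Fin n, emb n m a b c T f (ψ j) * emb n m a b c T' (ψ j) g := by
    rw [← Finset.sum_filter_of_ne
      (p := fun h : Fin m → Fin n => ∀ l ∈ S, f l = h l) (s := Finset.univ)
      (f := fun h => emb n m a b c T f h * emb n m a b c T' h g) ?nz]
    case nz =>
      intro h _ hne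
      by_contra hP
      push_neg at hP
      obtain ⟨l, hl, hfl⟩ := hP
      apply hne
      have : (∏ l ∈ S, if f l = h l then (1:ℂ) else 0) = 0 :=
        Finset.prod_eq_zero hl (by simp [hfl])
      show T _ _ * _ * _ = 0
      rw [this]; ring
    have hinv : ∀ h ∈ Finset.filter (fun x => ∀ l ∈ S, f l = x l) (Finset.univ : Finset (Fin m → Fin n)),
        ψ (h a, h b, h c) = h := by
      intro h hh
      simp only [Finset.mem_filter, Finset.mem_univ, true_and] at hh
      funext l
      by_cases h1 : l = a
      · subst h1; exact hψa _
      by_cases h2 : l = b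
      · subst h2; exact hψb _
      by_cases h3 : l = c
      · subst h3; exact hψc _
      · rw [hψS _ l ((hmemS l).2 ⟨h1, h2, h3⟩)]
        exact hh l ((hmemS l).2 ⟨h1, h2, h3⟩)
    refine Finset.sum_nbij'
      (i := fun h : Fin m → Fin n => ((h a, h b, h c) : Fin n × Fin n × Fin n))
      (j := ψ) ?_ ?_ ?_ ?_ ?_
    · intro h _; exact Finset.mem_univ _
    · intro j _
      simp only [Finset.mem_filter, Finset.mem_univ, true_and]
      intro l hl; exact (hψS j l hl).symm
    · intro h hh; exact hinv h hh
    · intro j _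
      simp only [hψa, hψb, hψc]
    · intro h hh; rw [hinv h hh]
  rw [step1]
  have term : ∀ j : Fin n × Fin n × Fin n,
      emb n m a b c T f (ψ j) * emb n m a b c T' (ψ j) g
        = T (f a, f b, f c) j * T' j (g a, g b, g c)
          * ∏ l ∈ S, (if f l = g l then (1:ℂ) else 0) := by
    intro j
    show T (f a, f b, f c) (ψ j a, ψ j b, ψ j c) * (∏ l ∈ S, if f l = ψ j l then (1:ℂ) else 0)
      * (T' (ψ j a, ψ j b, ψ j c) (g a, g b, g c) * ∏ l ∈ S, if ψ j l = g l then (1:ℂ) else 0) = _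
    rw [hψa, hψb, hψc]
    have p1 : (∏ l ∈ S, if f l = ψ j l then (1:ℂ) else 0) = 1 :=
      Finset.prod_eq_one (fun l hl => by rw [hψS j l hl, if_pos rfl])
    have p2 : (∏ l ∈ S, if ψ j l = g l then (1:ℂ) else 0)
        = ∏ l ∈ S, if f l = g l then (1:ℂ) else 0 :=
      Finset.prod_congr rfl (fun l hl => by rw [hψS j l hl])
    rw [p1, p2]
    show T (f a, f b, f c) (j.1, j.2.1, j.2.2) * 1 * (T' (j.1, j.2.1, j.2.2) (g a, g b, g c) * _) = _
    ring_nf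
  rw [Finset.sum_congr rfl (fun j _ => term j)]
  rw [← Finset.sum_mul]
  show _ = (T * T') (f a, f b, f c) (g a, g b, g c) * _
  rw [Matrix.mul_apply]

lemma T_ab_eq (n : ℕ) (r s : ℂ) :
    (fun p q => Rhat n r s (p.1, p.2.1) (q.1, q.2.1) * (if p.2.2 = q.2.2 then (1:ℂ) else 0))
      = R3a n r s := by
  funext p q
  obtain ⟨x, y, z⟩ := p
  obtain ⟨u, v, w⟩ := q
  show Rhat n r s (x, y) (u, v) * (if z = w then (1:ℂ) else 0) = _
  rw [Rhat_apply]
  simp only [R3a, Prod.mk.injEq]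
  split_ifs
  all_goals try ring
  all_goals (exfalso; omega)

lemma T_bc_eq (n : ℕ) (r s : ℂ) :
    (fun p q => (if p.1 = q.1 then (1:ℂ) else 0) * Rhat n r s (p.2.1, p.2.2) (q.2.1, q.2.2))
      = R3b n r s := by
  funext p q
  obtain ⟨x, y, z⟩ := p
  obtain ⟨u, v, w⟩ := q
  show (if x = u then (1:ℂ) else 0) * Rhat n r s (y, z) (v, w) = _
  rw [Rhat_apply]
  simp only [R3b, Prod.mk.injEq]
  split_ifs
  all_goals try ring
  all_goals (exfalso; omega)

/-- **Braid relation.** For every `m ≥ 3` and `1 ≤ i ≤ m−2`, the operators on `V^{⊗m}`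
satisfy `Ř_i Ř_{i+1} Ř_i = Ř_{i+1} Ř_i Ř_{i+1}` (with 1-based indices, `Ř_i` acting in
the factors `(i, i+1)`). -/
theorem braid_relation (n : ℕ) (hn : 1 ≤ n) (r s : ℂ) (hr : r ≠ 0) (hs : s ≠ 0)
    (m : ℕ) (hm : 3 ≤ m) (i : ℕ) (hi1 : 1 ≤ i) (hi2 : i ≤ m - 2) :
    op2At n m (Rhat n r s) ⟨i - 1, by omega⟩ ⟨i, by omega⟩ *
        op2At n m (Rhat n r s) ⟨i, by omega⟩ ⟨i + 1, by omega⟩ *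
        op2At n m (Rhat n r s) ⟨i - 1, by omega⟩ ⟨i, by omega⟩ =
      op2At n m (Rhat n r s) ⟨i, by omega⟩ ⟨i + 1, by omega⟩ *
        op2At n m (Rhat n r s) ⟨i - 1, by omega⟩ ⟨i, by omega⟩ *
        op2At n m (Rhat n r s) ⟨i, by omega⟩ ⟨i + 1, by omega⟩ := by
  have hab : (⟨i - 1, by omega⟩ : Fin m) ≠ ⟨i, by omega⟩ := by
    simp only [ne_eq, Fin.mk.injEq]; omega
  have hac : (⟨i - 1, by omega⟩ : Fin m) ≠ ⟨i + 1, by omega⟩ := by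
    simp only [ne_eq, Fin.mk.injEq]; omega
  have hbc : (⟨i, by omega⟩ : Fin m) ≠ ⟨i + 1, by omega⟩ := by
    simp only [ne_eq, Fin.mk.injEq]; omega
  rw [op2At_eq_emb_ab n m (Rhat n r s) _ _ _ hab hac hbc,
    op2At_eq_emb_bc n m (Rhat n r s) _ _ _ hab hac hbc,
    T_ab_eq, T_bc_eq,
    emb_mul n m _ _ _ hab hac hbc, emb_mul n m _ _ _ hab hac hbc,
    emb_mul n m _ _ _ hab hac hbc, emb_mul n m _ _ _ hab hac hbc,
    braid3 n r s]
end

section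
/- Assume that r s^{-1} is not a root of unity (i.e., (r/s)^m ≠ 1 for all integers m ≥ 1). For every k ≥ 2, let W_k be the subspace Σ_{i=0}^{k-2} V^{⊗i} ⊗ S²_{r,s}(V) ⊗ V^{⊗(k−i−2)} of V^{⊗k}. Then the quotient space V^{⊗k}/W_k has dimension equal to the binomial coefficient C(n, k). -/
open BigOperators

/-- The subspace `S²_{r,s}(V)` of `V ⊗ V`: the span of
`{v_i ⊗ v_i : 1 ≤ i ≤ n} ∪ {v_i ⊗ v_j + s v_j ⊗ v_i : 1 ≤ i < j ≤ n}`. -/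
noncomputable def Ssq (n : ℕ) (s : ℂ) : Submodule ℂ ((Fin n × Fin n) → ℂ) :=
  Submodule.span ℂ
    ({ w | ∃ i : Fin n, w = (Pi.single (i, i) (1:ℂ) : (Fin n × Fin n) → ℂ) } ∪
     { w | ∃ i j : Fin n, i < j ∧
        w = (Pi.single (i, j) (1:ℂ) : (Fin n × Fin n) → ℂ)
            + s • (Pi.single (j, i) (1:ℂ) : (Fin n × Fin n) → ℂ) })

/-- The subspace `W_k = Σ_{i=0}^{k-2} V^{⊗i} ⊗ S²_{r,s}(V) ⊗ V^{⊗(k−i−2)}` of `V^{⊗k}`,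
where `V^{⊗k}` is identified with `(Fin k → Fin n) → ℂ` via the basis
`v_{f 0} ⊗ ⋯ ⊗ v_{f (k-1)} ↔ f`: it is the span of all vectors of the form
`(basis vector g on the factors ≠ p, p+1) ⊗ (w ∈ S²_{r,s}(V) in the factors p, p+1)`. -/
noncomputable def Wk (n : ℕ) (s : ℂ) (k : ℕ) : Submodule ℂ ((Fin k → Fin n) → ℂ) :=
  Submodule.span ℂ
    { v | ∃ p : ℕ, ∃ hp : p + 2 ≤ k, ∃ w ∈ Ssq n s, ∃ g : Fin k → Fin n,
        v = fun f => w (f ⟨p, by omega⟩, f ⟨p + 1, by omega⟩) *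
          ∏ l ∈ Finset.univ \ ({⟨p, by omega⟩, ⟨p + 1, by omega⟩} : Finset (Fin k)),
            (if f l = g l then (1:ℂ) else 0) }

namespace FQW
open Finset
variable {n k : ℕ}

def inv (f : Fin k → Fin n) : ℕ :=
  ((Finset.univ : Finset (Fin k × Fin k)).filter fun q => q.1 < q.2 ∧ f q.2 < f q.1).card

-- (proved) see b.lean
lemma swap_lt_iff {a b x y : Fin k} (hab : (b : ℕ) = (a : ℕ) + 1)
    (h1 : ¬(x = a ∧ y = b)) (h2 : ¬(x = b ∧ y = a)) :
    Equiv.swap a b x < Equiv.swap a b y ↔ x < y := by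
  have hx := Fin.val_eq_val x a
  have hx' := Fin.val_eq_val x b
  have hy := Fin.val_eq_val y a
  have hy' := Fin.val_eq_val y b
  simp only [Equiv.swap_apply_def, Fin.lt_def]
  split_ifs <;> omega

lemma inv_comp_swap (f : Fin k → Fin n) {a b : Fin k} (hab : (b : ℕ) = (a : ℕ) + 1)
    (hf : f a < f b) : inv (f ∘ Equiv.swap a b) = inv f + 1 := by
  classical
  set S : (Fin k → Fin n) → Finset (Fin k × Fin k) := fun g =>
    (Finset.univ.filter fun q => q.1 < q.2 ∧ g q.2 < g q.1) with hS
  have swap_eq_a : ∀ x : Fin k, Equiv.swap a b x = a → x = b := fun x h =>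
    (Equiv.swap a b).injective (h.trans (Equiv.swap_apply_right a b).symm)
  have swap_eq_b : ∀ x : Fin k, Equiv.swap a b x = b → x = a := fun x h =>
    (Equiv.swap a b).injective (h.trans (Equiv.swap_apply_left a b).symm)
  have pairne : ∀ x y : Fin k, x < y → (x, y) ≠ (b, a) := by
    intro x y hxy h
    rw [Prod.mk.injEq] at h
    obtain ⟨h1, h2⟩ := h; subst h1; subst h2
    rw [Fin.lt_def] at hxy; omega
  have hmemab : (a, b) ∈ S (f ∘ Equiv.swap a b) := by
    simp only [hS, mem_filter, mem_univ, true_and, Function.comp_apply,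
      Equiv.swap_apply_left, Equiv.swap_apply_right]
    exact ⟨by rw [Fin.lt_def]; omega, hf⟩
  have hnmemab : (a, b) ∉ S f := by
    simp only [hS, mem_filter, mem_univ, true_and, not_and]
    intro _; exact not_lt.mpr hf.le
  have key : ∀ q : Fin k × Fin k, q ≠ (a, b) → q ≠ (b, a) →
      (q ∈ S (f ∘ Equiv.swap a b) ↔ (Equiv.swap a b q.1, Equiv.swap a b q.2) ∈ S f) := by
    rintro ⟨x, y⟩ hq1 hq2
    simp only [hS, mem_filter, mem_univ, true_and, Function.comp_apply]
    rw [swap_lt_iff hab (by simpa [Prod.ext_iff] using hq1) (by simpa [Prod.ext_iff] using hq2)]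
  have hcard : ((S (f ∘ Equiv.swap a b)).erase (a, b)).card = ((S f).erase (a, b)).card := by
    apply Finset.card_bij' (i := fun q _ => (Equiv.swap a b q.1, Equiv.swap a b q.2))
      (j := fun q _ => (Equiv.swap a b q.1, Equiv.swap a b q.2))
    · rintro ⟨x, y⟩ hq
      rw [mem_erase] at hq ⊢
      have hxy : x < y := by
        have := hq.2; simp only [hS, mem_filter] at this; exact this.2.1
      refine ⟨?_, (key _ hq.1 (pairne x y hxy)).mp hq.2⟩
      intro h; rw [Prod.mk.injEq] at h
      have h1 := swap_eq_a x h.1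
      have h2 := swap_eq_b y h.2
      subst h1; subst h2
      rw [Fin.lt_def] at hxy; omega
    · rintro ⟨x, y⟩ hq
      rw [mem_erase] at hq ⊢
      have hxy : x < y := by
        have := hq.2; simp only [hS, mem_filter] at this; exact this.2.1
      have hne1 : (Equiv.swap a b x, Equiv.swap a b y) ≠ (a, b) := by
        intro h; rw [Prod.mk.injEq] at h
        exact pairne x y hxy (by rw [swap_eq_a x h.1, swap_eq_b y h.2])
      have hne2 : (Equiv.swap a b x, Equiv.swap a b y) ≠ (b, a) := by
        intro h; rw [Prod.mk.injEq] at h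
        exact hq.1 (by rw [swap_eq_b x h.1, swap_eq_a y h.2])
      refine ⟨hne1, ?_⟩
      rw [key _ hne1 hne2]
      simpa [Equiv.swap_apply_self] using hq.2
    · rintro ⟨x, y⟩ _; simp [Equiv.swap_apply_self]
    · rintro ⟨x, y⟩ _; simp [Equiv.swap_apply_self]
  have e1 : (S (f ∘ Equiv.swap a b)).card = ((S (f ∘ Equiv.swap a b)).erase (a, b)).card + 1 := by
    rw [Finset.card_erase_of_mem hmemab]
    have : 0 < (S (f ∘ Equiv.swap a b)).card := Finset.card_pos.mpr ⟨_, hmemab⟩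
    omega
  have e2 : ((S f).erase (a, b)).card = (S f).card := by
    rw [Finset.erase_eq_of_notMem hnmemab]
  show (S (f ∘ Equiv.swap a b)).card = (S f).card + 1
  rw [e1, hcard, e2]

lemma inv_eq_zero {f : Fin k → Fin n} (hf : StrictMono f) : inv f = 0 := by
  rw [inv, Finset.card_eq_zero, Finset.filter_eq_empty_iff]
  rintro q -
  rintro ⟨h1, h2⟩
  exact absurd (hf h1) (not_lt.mpr h2.le)

lemma strictMono_of_adj {f : Fin k → Fin n}
    (h : ∀ p : ℕ, (hp : p + 2 ≤ k) → f ⟨p, by omega⟩ < f ⟨p + 1, by omega⟩) :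
    StrictMono f := by
  intro x y hxy
  obtain ⟨d, hd⟩ : ∃ d, (y : ℕ) = (x : ℕ) + d + 1 := ⟨(y : ℕ) - (x : ℕ) - 1, by
    rw [Fin.lt_def] at hxy; omega⟩
  clear hxy
  induction d generalizing y with
  | zero =>
    have hyk := y.isLt
    have hy : y = ⟨(x : ℕ) + 1, by omega⟩ := Fin.ext (by simp; omega)
    rw [show f y = f ⟨(x : ℕ) + 1, by omega⟩ from congrArg f hy]
    exact h (x : ℕ) (by omega)
  | succ d ih =>
    have hyk := y.isLt
    have hk2 : (x : ℕ) + d + 2 < k := by omega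
    have h1 : f x < f ⟨(x : ℕ) + d + 1, by omega⟩ :=
      ih (y := ⟨(x : ℕ) + d + 1, by omega⟩) (by simp)
    have h2 : f ⟨(x : ℕ) + d + 1, by omega⟩ < f y := by
      have hy : y = ⟨(x : ℕ) + d + 2, by omega⟩ := Fin.ext (by simp; omega)
      rw [show f y = f ⟨(x : ℕ) + d + 2, by omega⟩ from congrArg f hy]
      exact h ((x : ℕ) + d + 1) (by omega)
    exact h1.trans h2

lemma prod_single_eq (a b : Fin k) (hab : a ≠ b) (i j : Fin n) (g : Fin k → Fin n) :
    (fun h : Fin k → Fin n => (Pi.single (i, j) (1:ℂ) : (Fin n × Fin n) → ℂ) (h a, h b) *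
      ∏ l ∈ Finset.univ \ ({a, b} : Finset (Fin k)), (if h l = g l then (1:ℂ) else 0)) =
    Pi.single (Function.update (Function.update g a i) b j) (1:ℂ) := by
  classical
  funext h
  set u : Fin k → Fin n := Function.update (Function.update g a i) b j with hu
  have hua : u a = i := by rw [hu, Function.update_of_ne hab, Function.update_self]
  have hub : u b = j := by rw [hu, Function.update_self]
  have hul : ∀ l, l ≠ a → l ≠ b → u l = g l := by
    intro l hla hlb
    rw [hu, Function.update_of_ne hlb, Function.update_of_ne hla]
  rw [Pi.single_apply, Pi.single_apply]
  by_cases hh : h = u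
  · subst hh
    rw [if_pos rfl, if_pos (by rw [hua, hub]), Finset.prod_eq_one, mul_one]
    intro l hl
    simp only [Finset.mem_sdiff, Finset.mem_insert, Finset.mem_singleton] at hl
    push_neg at hl
    rw [if_pos (hul l hl.2.1 hl.2.2)]
  · rw [if_neg hh]
    by_cases hp : (h a, h b) = (i, j)
    · -- some l outside {a,b} differs
      have : ∃ l, l ≠ a ∧ l ≠ b ∧ h l ≠ g l := by
        by_contra hcon
        push_neg at hcon
        apply hh
        funext l
        by_cases hla : l = a
        · subst hla; rw [hua]; exact congrArg Prod.fst hp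
        by_cases hlb : l = b
        · subst hlb; rw [hub]; exact congrArg Prod.snd hp
        · rw [hul l hla hlb]; exact hcon l hla hlb
      obtain ⟨l, hla, hlb, hne⟩ := this
      rw [Finset.prod_eq_zero (i := l) (by simp [hla, hlb]) (by rw [if_neg hne]), mul_zero]
    · rw [if_neg hp, zero_mul]

noncomputable def Mspan (n k : ℕ) : Submodule ℂ ((Fin k → Fin n) → ℂ) :=
  Submodule.span ℂ {v | ∃ f : Fin k → Fin n, StrictMono f ∧ v = Pi.single f (1:ℂ)}

lemma gen_mem (s : ℂ) (p : ℕ) (hp : p + 2 ≤ k) {w : (Fin n × Fin n) → ℂ}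
    (hw : w ∈ Ssq n s) (g : Fin k → Fin n) :
    (fun f : Fin k → Fin n => w (f ⟨p, by omega⟩, f ⟨p + 1, by omega⟩) *
      ∏ l ∈ Finset.univ \ ({⟨p, by omega⟩, ⟨p + 1, by omega⟩} : Finset (Fin k)),
        (if f l = g l then (1:ℂ) else 0)) ∈ Wk n s k :=
  Submodule.subset_span ⟨p, hp, w, hw, g, rfl⟩

lemma single_mem_sup {s : ℂ} (hs : s ≠ 0) (f : Fin k → Fin n) :
    Pi.single f (1:ℂ) ∈ Mspan n k ⊔ Wk n s k := by
  classical
  suffices H : ∀ N : ℕ, ∀ f : Fin k → Fin n, inv f = N →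
      Pi.single f (1:ℂ) ∈ Mspan n k ⊔ Wk n s k from H (inv f) f rfl
  intro N
  induction N using Nat.strong_induction_on with
  | _ N ih =>
    intro f hfN
    by_cases hc : ∀ p : ℕ, (hp : p + 2 ≤ k) → f ⟨p, by omega⟩ < f ⟨p + 1, by omega⟩
    · -- strictly monotone: in Mspan
      exact Submodule.mem_sup_left (Submodule.subset_span ⟨f, strictMono_of_adj hc, rfl⟩)
    · push_neg at hc
      obtain ⟨p, hp, hle⟩ := hc
      set a : Fin k := ⟨p, by omega⟩ with ha
      set b : Fin k := ⟨p + 1, by omega⟩ with hb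
      have hab : a ≠ b := by rw [ha, hb]; intro h; simpa using congrArg Fin.val h
      have hvab : (b : ℕ) = (a : ℕ) + 1 := rfl
      rcases eq_or_lt_of_le hle with heq | hlt
      · -- f b = f a : generator of the first type
        have hw : (Pi.single (f a, f a) (1:ℂ) : (Fin n × Fin n) → ℂ) ∈ Ssq n s :=
          Submodule.subset_span (Or.inl ⟨f a, rfl⟩)
        have hfu : Function.update (Function.update f a (f a)) b (f a) = f := by
          funext l
          by_cases hlb : l = b
          · subst hlb; rw [Function.update_self, heq]
          by_cases hla : l = a
          · subst hla; rw [Function.update_of_ne hlb, Function.update_self]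
          · rw [Function.update_of_ne hlb, Function.update_of_ne hla]
        have := gen_mem (k := k) s p hp hw f
        rw [show (fun f' : Fin k → Fin n =>
            (Pi.single (f a, f a) (1:ℂ) : (Fin n × Fin n) → ℂ) (f' ⟨p, by omega⟩, f' ⟨p + 1, by omega⟩) *
            ∏ l ∈ Finset.univ \ ({⟨p, by omega⟩, ⟨p + 1, by omega⟩} : Finset (Fin k)),
              (if f' l = f l then (1:ℂ) else 0)) = Pi.single f (1:ℂ) from by
          rw [prod_single_eq a b hab (f a) (f a) f, hfu]] at this
        exact Submodule.mem_sup_right this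
      · -- f b < f a : descent
        set i : Fin n := f b with hi
        set j : Fin n := f a with hj
        set f' : Fin k → Fin n := f ∘ Equiv.swap a b with hf'
        have hf'a : f' a = i := by rw [hf']; simp [Equiv.swap_apply_left, hi]
        have hf'b : f' b = j := by rw [hf']; simp [Equiv.swap_apply_right, hj]
        have hcomp : f' ∘ Equiv.swap a b = f := by
          funext l; simp [hf', Equiv.swap_apply_self]
        have hinv : inv f = inv f' + 1 := by
          rw [← hcomp]
          exact inv_comp_swap f' hvab (by rw [hf'a, hf'b]; exact hlt)
        have hw : ((Pi.single (i, j) (1:ℂ) : (Fin n × Fin n) → ℂ)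
            + s • (Pi.single (j, i) (1:ℂ) : (Fin n × Fin n) → ℂ)) ∈ Ssq n s :=
          Submodule.subset_span (Or.inr ⟨i, j, hlt, rfl⟩)
        have hu1 : Function.update (Function.update f a i) b j = f' := by
          funext l
          by_cases hlb : l = b
          · subst hlb; rw [Function.update_self, hf'b]
          by_cases hla : l = a
          · subst hla; rw [Function.update_of_ne hlb, Function.update_self, hf'a]
          · rw [Function.update_of_ne hlb, Function.update_of_ne hla, hf',
              Function.comp_apply, Equiv.swap_apply_of_ne_of_ne hla hlb]
        have hu2 : Function.update (Function.update f a j) b i = f := by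
          funext l
          by_cases hlb : l = b
          · subst hlb; rw [Function.update_self, hi]
          by_cases hla : l = a
          · subst hla; rw [Function.update_of_ne hlb, Function.update_self, hj]
          · rw [Function.update_of_ne hlb, Function.update_of_ne hla]
        have hveq : (fun f'' : Fin k → Fin n =>
            ((Pi.single (i, j) (1:ℂ) : (Fin n × Fin n) → ℂ)
              + s • (Pi.single (j, i) (1:ℂ) : (Fin n × Fin n) → ℂ))
              (f'' ⟨p, by omega⟩, f'' ⟨p + 1, by omega⟩) *
            ∏ l ∈ Finset.univ \ ({⟨p, by omega⟩, ⟨p + 1, by omega⟩} : Finset (Fin k)),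
              (if f'' l = f l then (1:ℂ) else 0)) =
            (Pi.single f' (1:ℂ) : (Fin k → Fin n) → ℂ)
              + s • (Pi.single f (1:ℂ) : (Fin k → Fin n) → ℂ) := by
          have hsplit : (fun f'' : Fin k → Fin n =>
              ((Pi.single (i, j) (1:ℂ) : (Fin n × Fin n) → ℂ)
                + s • (Pi.single (j, i) (1:ℂ) : (Fin n × Fin n) → ℂ))
                (f'' ⟨p, by omega⟩, f'' ⟨p + 1, by omega⟩) *
              ∏ l ∈ Finset.univ \ ({⟨p, by omega⟩, ⟨p + 1, by omega⟩} : Finset (Fin k)),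
                (if f'' l = f l then (1:ℂ) else 0)) =
              (fun h : Fin k → Fin n => (Pi.single (i, j) (1:ℂ) : (Fin n × Fin n) → ℂ) (h a, h b) *
                ∏ l ∈ Finset.univ \ ({a, b} : Finset (Fin k)), (if h l = f l then (1:ℂ) else 0))
              + s • (fun h : Fin k → Fin n => (Pi.single (j, i) (1:ℂ) : (Fin n × Fin n) → ℂ) (h a, h b) *
                ∏ l ∈ Finset.univ \ ({a, b} : Finset (Fin k)), (if h l = f l then (1:ℂ) else 0)) := by
            funext h
            simp only [Pi.add_apply, Pi.smul_apply, smul_eq_mul]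
            ring
          rw [hsplit, prod_single_eq a b hab i j f, prod_single_eq a b hab j i f, hu1, hu2]
        have hgen := gen_mem (k := k) s p hp hw f
        rw [hveq] at hgen
        have hmemf' : Pi.single f' (1:ℂ) ∈ Mspan n k ⊔ Wk n s k :=
          ih (inv f') (by omega) f' rfl
        have : Pi.single f (1:ℂ) = s⁻¹ • (((Pi.single f' (1:ℂ) : (Fin k → Fin n) → ℂ)
              + s • (Pi.single f (1:ℂ) : (Fin k → Fin n) → ℂ))
            - (Pi.single f' (1:ℂ) : (Fin k → Fin n) → ℂ)) := by
          rw [add_sub_cancel_left, smul_smul, inv_mul_cancel₀ hs, one_smul]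
        rw [this]
        exact Submodule.smul_mem _ _ (Submodule.sub_mem _
          (Submodule.mem_sup_right hgen) hmemf')

lemma sup_eq_top {s : ℂ} (hs : s ≠ 0) : Mspan n k ⊔ Wk n s k = ⊤ := by
  classical
  rw [eq_top_iff, ← (Pi.basisFun ℂ (Fin k → Fin n)).span_eq, Submodule.span_le]
  rintro v ⟨f, rfl⟩
  rw [Pi.basisFun_apply]
  exact single_mem_sup hs f

open scoped Classical in
noncomputable def xi (s : ℂ) (g f : Fin k → Fin n) : ℂ :=
  if Function.Injective f ∧ Finset.image f Finset.univ = Finset.image g Finset.univ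
  then (-s⁻¹) ^ inv f else 0

noncomputable def Phi (s : ℂ) (g : Fin k → Fin n) : ((Fin k → Fin n) → ℂ) →ₗ[ℂ] ℂ where
  toFun v := ∑ f, xi s g f * v f
  map_add' v w := by
    simp only [Pi.add_apply, mul_add]
    rw [Finset.sum_add_distrib]
  map_smul' c v := by
    simp only [Pi.smul_apply, smul_eq_mul, RingHom.id_apply]
    rw [Finset.mul_sum]
    congr 1; funext f; ring

lemma Phi_single (s : ℂ) (g u : Fin k → Fin n) :
    Phi s g (Pi.single u (1:ℂ)) = xi s g u := by
  classical
  simp only [Phi, LinearMap.coe_mk, AddHom.coe_mk]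
  rw [Finset.sum_eq_single u]
  · rw [Pi.single_apply, if_pos rfl, mul_one]
  · intro f _ hfu
    rw [Pi.single_apply, if_neg hfu, mul_zero]
  · intro h; exact absurd (Finset.mem_univ u) h

/-- The transfer linear map `w ↦ (f ↦ w (f a, f b) * ∏ …)`. -/
noncomputable def Tmap (p : ℕ) (hp : p + 2 ≤ k) (g : Fin k → Fin n) :
    ((Fin n × Fin n) → ℂ) →ₗ[ℂ] ((Fin k → Fin n) → ℂ) where
  toFun w := fun f => w (f ⟨p, by omega⟩, f ⟨p + 1, by omega⟩) *
    ∏ l ∈ Finset.univ \ ({⟨p, by omega⟩, ⟨p + 1, by omega⟩} : Finset (Fin k)),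
      (if f l = g l then (1:ℂ) else 0)
  map_add' v w := by funext f; simp [add_mul]
  map_smul' c v := by funext f; simp [mul_assoc]

lemma Wk_le_ker (s : ℂ) (hs : s ≠ 0) (g : Fin k → Fin n) :
    Wk n s k ≤ LinearMap.ker (Phi s g) := by
  classical
  rw [Wk, Submodule.span_le]
  rintro v ⟨p, hp, w, hw, g₀, rfl⟩
  set a : Fin k := ⟨p, by omega⟩ with ha
  set b : Fin k := ⟨p + 1, by omega⟩ with hb
  have hab : a ≠ b := by rw [ha, hb]; intro h; simpa using congrArg Fin.val h
  have hvab : (b : ℕ) = (a : ℕ) + 1 := rfl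
  have hkey : w ∈ LinearMap.ker ((Phi s g).comp (Tmap p hp g₀)) := by
    apply Submodule.span_le.mpr _ hw
    rintro w' (⟨i, rfl⟩ | ⟨i, j, hij, rfl⟩)
    · -- diagonal generator
      rw [SetLike.mem_coe, LinearMap.mem_ker, LinearMap.comp_apply]
      have hT : Tmap p hp g₀ (Pi.single (i, i) (1:ℂ)) =
          Pi.single (Function.update (Function.update g₀ a i) b i) (1:ℂ) := by
        rw [Tmap]
        exact prod_single_eq a b hab i i g₀
      rw [hT, Phi_single]
      rw [xi, if_neg]
      rintro ⟨hinj, -⟩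
      apply hab
      apply hinj
      rw [Function.update_of_ne hab, Function.update_self, Function.update_self]
    · -- off-diagonal generator
      rw [SetLike.mem_coe, LinearMap.mem_ker, LinearMap.comp_apply, map_add, map_smul,
        map_add, map_smul]
      set u₁ : Fin k → Fin n := Function.update (Function.update g₀ a i) b j with hu1
      set u₂ : Fin k → Fin n := Function.update (Function.update g₀ a j) b i with hu2
      have hT1 : Tmap p hp g₀ (Pi.single (i, j) (1:ℂ)) = Pi.single u₁ (1:ℂ) := by
        rw [Tmap]; exact prod_single_eq a b hab i j g₀
      have hT2 : Tmap p hp g₀ (Pi.single (j, i) (1:ℂ)) = Pi.single u₂ (1:ℂ) := by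
        rw [Tmap]; exact prod_single_eq a b hab j i g₀
      rw [hT1, hT2, Phi_single, Phi_single]
      have hu1a : u₁ a = i := by rw [hu1, Function.update_of_ne hab, Function.update_self]
      have hu1b : u₁ b = j := by rw [hu1, Function.update_self]
      have hcomp : u₂ = u₁ ∘ Equiv.swap a b := by
        funext l
        by_cases hlb : l = b
        · subst hlb
          rw [hu2, Function.update_self, Function.comp_apply, Equiv.swap_apply_right, hu1a]
        by_cases hla : l = a
        · subst hla
          rw [hu2, Function.update_of_ne hab, Function.update_self, Function.comp_apply,
            Equiv.swap_apply_left, hu1b]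
        · rw [Function.comp_apply, Equiv.swap_apply_of_ne_of_ne hla hlb, hu2, hu1,
            Function.update_of_ne hlb, Function.update_of_ne hla,
            Function.update_of_ne hlb, Function.update_of_ne hla]
      have hinj : Function.Injective u₁ ↔ Function.Injective u₂ := by
        rw [hcomp]
        constructor
        · intro h; exact h.comp (Equiv.swap a b).injective
        · intro h
          have : (u₁ ∘ Equiv.swap a b) ∘ Equiv.swap a b = u₁ := by
            funext l; simp [Equiv.swap_apply_self]
          rw [← this]
          exact h.comp (Equiv.swap a b).injective
      have himg : Finset.image u₁ Finset.univ = Finset.image u₂ Finset.univ := by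
        rw [hcomp]
        conv_lhs => rw [← Finset.image_univ_equiv (Equiv.swap a b), Finset.image_image]
      by_cases hcond : Function.Injective u₁ ∧
          Finset.image u₁ Finset.univ = Finset.image g Finset.univ
      · have hinv : inv u₂ = inv u₁ + 1 := by
          rw [hcomp]
          exact inv_comp_swap u₁ hvab (by rw [hu1a, hu1b]; exact hij)
        rw [xi, if_pos hcond, xi, if_pos ⟨hinj.mp hcond.1, himg ▸ hcond.2⟩, hinv,
          pow_succ, smul_eq_mul]
        field_simp
        ring
      · rw [xi, if_neg hcond, xi, if_neg, smul_zero, add_zero]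
        intro hcond2
        exact hcond ⟨hinj.mpr hcond2.1, himg.trans hcond2.2⟩
  simpa [LinearMap.mem_ker, LinearMap.comp_apply, Tmap] using hkey

lemma xi_strictMono (s : ℂ) {g g₀ : Fin k → Fin n} (hg : StrictMono g) (hg₀ : StrictMono g₀) :
    xi s g₀ g = if g = g₀ then 1 else 0 := by
  classical
  by_cases h : g = g₀
  · subst h
    rw [if_pos rfl, xi, if_pos ⟨hg.injective, rfl⟩, inv_eq_zero hg, pow_zero]
  · rw [if_neg h, xi, if_neg]
    rintro ⟨-, himg⟩
    apply h
    have hrg : Set.range g = Set.range g₀ := by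
      rw [← Set.image_univ, ← Set.image_univ, ← Finset.coe_univ, ← Finset.coe_image,
        ← Finset.coe_image, himg]
    haveI : WellFoundedLT (Fin k) := inferInstance
    exact (hg.range_inj hg₀).mp hrg

noncomputable def incEquiv (n k : ℕ) :
    {f : Fin k → Fin n // StrictMono f} ≃ {t : Finset (Fin n) // t.card = k} where
  toFun f := ⟨Finset.image f.1 Finset.univ, by
    rw [Finset.card_image_of_injective _ f.2.injective, Finset.card_univ, Fintype.card_fin]⟩
  invFun t := ⟨fun i => t.1.orderEmbOfFin t.2 i, (t.1.orderEmbOfFin t.2).strictMono⟩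
  left_inv f := by
    apply Subtype.ext
    exact (Finset.orderEmbOfFin_unique _
      (fun x => Finset.mem_image_of_mem _ (Finset.mem_univ x)) f.2).symm
  right_inv t := by
    apply Subtype.ext
    apply Finset.coe_injective
    rw [Finset.coe_image, Finset.coe_univ, Set.image_univ]
    exact Finset.range_orderEmbOfFin t.1 t.2

end FQW

/-- **Dimension of the `k`-th fundamental module.** If `r s⁻¹` is not a root of unity,
then for every `k ≥ 2` the quotient `V^{⊗k}/W_k` has dimension `C(n, k)`. -/
theorem finrank_quotient_Wk (n : ℕ) (hn : 1 ≤ n) (r s : ℂ) (hr : r ≠ 0) (hs : s ≠ 0)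
    (hroot : ∀ t : ℕ, 1 ≤ t → (r * s⁻¹) ^ t ≠ 1) (k : ℕ) (hk : 2 ≤ k) :
    Module.finrank ℂ (((Fin k → Fin n) → ℂ) ⧸ Wk n s k) = Nat.choose n k := by
  classical
  haveI : Fintype {f : Fin k → Fin n // StrictMono f} := Fintype.ofFinite _
  set fam : {f : Fin k → Fin n // StrictMono f} → (((Fin k → Fin n) → ℂ) ⧸ Wk n s k) :=
    fun g => Submodule.Quotient.mk (Pi.single (g : Fin k → Fin n) (1:ℂ)) with hfam
  have hspan : ⊤ ≤ Submodule.span ℂ (Set.range fam) := by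
    intro x _
    obtain ⟨y, rfl⟩ := Submodule.mkQ_surjective _ x
    have hy : y ∈ FQW.Mspan n k ⊔ Wk n s k := by rw [FQW.sup_eq_top hs]; trivial
    obtain ⟨m, hm, w, hw, rfl⟩ := Submodule.mem_sup.mp hy
    rw [map_add]
    have hwz : (Wk n s k).mkQ w = 0 := by
      rw [Submodule.mkQ_apply, Submodule.Quotient.mk_eq_zero]; exact hw
    rw [hwz, add_zero]
    rw [FQW.Mspan] at hm
    have h1 : (Wk n s k).mkQ m ∈ Submodule.span ℂ ((Wk n s k).mkQ ''
        {v | ∃ f : Fin k → Fin n, StrictMono f ∧ v = Pi.single f (1:ℂ)}) := by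
      rw [← Submodule.map_span]
      exact Submodule.mem_map_of_mem hm
    have hsub : (Wk n s k).mkQ ''
        {v | ∃ f : Fin k → Fin n, StrictMono f ∧ v = Pi.single f (1:ℂ)} ⊆ Set.range fam := by
      rintro v ⟨v', ⟨f, hf, rfl⟩, rfl⟩
      exact ⟨⟨f, hf⟩, by simp [hfam, Submodule.mkQ_apply]⟩
    exact Submodule.span_mono hsub h1
  have hlin : LinearIndependent ℂ fam := by
    rw [Fintype.linearIndependent_iff]
    intro c hc g₀
    have hsum : (∑ g, c g • (Pi.single (g : Fin k → Fin n) (1:ℂ) : (Fin k → Fin n) → ℂ))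
        ∈ Wk n s k := by
      rw [← Submodule.Quotient.mk_eq_zero, ← Submodule.mkQ_apply]
      have : (Wk n s k).mkQ (∑ g, c g • (Pi.single (g : Fin k → Fin n) (1:ℂ) :
          (Fin k → Fin n) → ℂ)) = ∑ g, c g • fam g := by
        rw [map_sum]
        exact Finset.sum_congr rfl fun g _ => by
          rw [map_smul, hfam, Submodule.mkQ_apply]
      rw [this, hc]
    have hPhi := FQW.Wk_le_ker s hs g₀ hsum
    rw [LinearMap.mem_ker, map_sum] at hPhi
    simp only [map_smul, smul_eq_mul, FQW.Phi_single] at hPhi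
    rw [Finset.sum_eq_single g₀] at hPhi
    · rwa [FQW.xi_strictMono s g₀.2 g₀.2, if_pos rfl, mul_one] at hPhi
    · intro g _ hgg₀
      rw [FQW.xi_strictMono s g.2 g₀.2, if_neg, mul_zero]
      exact fun h => hgg₀ (Subtype.ext h)
    · intro h; exact absurd (Finset.mem_univ g₀) h
  let B := Module.Basis.mk hlin hspan
  rw [Module.finrank_eq_card_basis B, Fintype.card_congr (FQW.incEquiv n k),
    Fintype.card_finset_len, Fintype.card_fin]
end
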